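/- For each θ ∈ [0, π], the linear map ρ_θ on ℝ⁴ given by the block matrix with upper-left block [[cos 2θ, sin 2θ],[sin 2θ, −cos 2θ]] acting on (q₁,q₂) and lower-right block [[−cos 2θ, −sin 2θ],[−sin 2θ, cos 2θ]] acting on (p₁,p₂) is an involution, is anti-symplectic for ω₀ = dp₁∧dq₁ + dp₂∧dq₂, and leaves the rotating Kepler Hamiltonian F invariant. -/
import Mathlib


/-- The rotating Kepler Hamiltonian. -/
noncomputable def rotKepler (z : (ℝ × ℝ) × ℝ × ℝ) : ℝ :=
  (z.2.1 ^ 2 + z.2.2 ^ 2) / 2 - 1 / Real.sqrt (z.1.1 ^ 2 + z.1.2 ^ 2) +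
    z.1.1 * z.2.2 - z.1.2 * z.2.1

/-- The family of linear involutions `ρ_θ` of the rotating Kepler problem. -/
noncomputable def rhoTheta (θ : ℝ) (z : (ℝ × ℝ) × ℝ × ℝ) : (ℝ × ℝ) × ℝ × ℝ :=
  ((Real.cos (2 * θ) * z.1.1 + Real.sin (2 * θ) * z.1.2,
    Real.sin (2 * θ) * z.1.1 - Real.cos (2 * θ) * z.1.2),
   (-(Real.cos (2 * θ)) * z.2.1 - Real.sin (2 * θ) * z.2.2,
    -(Real.sin (2 * θ)) * z.2.1 + Real.cos (2 * θ) * z.2.2))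

/-- The standard symplectic form `ω₀ = dp₁ ∧ dq₁ + dp₂ ∧ dq₂`. -/
def omega0 (v w : (ℝ × ℝ) × ℝ × ℝ) : ℝ :=
  v.2.1 * w.1.1 - w.2.1 * v.1.1 + v.2.2 * w.1.2 - w.2.2 * v.1.2

/-- for each `θ ∈ [0,π]`, the linear map `ρ_θ` is an involution,
is anti-symplectic for `ω₀` (being linear, it equals its own derivative), and
leaves the rotating Kepler Hamiltonian invariant. -/
theorem rhoTheta_involution_antisymplectic_invariant (θ : ℝ)
    (hθ : θ ∈ Set.Icc 0 Real.pi) :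
    (∀ z, rhoTheta θ (rhoTheta θ z) = z) ∧
    (∀ v w, omega0 (rhoTheta θ v) (rhoTheta θ w) = -omega0 v w) ∧
    (∀ z, rotKepler (rhoTheta θ z) = rotKepler z) := by
  have h : Real.cos (2 * θ) ^ 2 + Real.sin (2 * θ) ^ 2 = 1 :=
    Real.cos_sq_add_sin_sq (2 * θ)
  refine ⟨?_, ?_, ?_⟩
  · intro z
    simp only [rhoTheta, Prod.ext_iff]
    refine ⟨⟨?_, ?_⟩, ?_, ?_⟩
    · linear_combination z.1.1 * h
    · linear_combination z.1.2 * h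
    · linear_combination z.2.1 * h
    · linear_combination z.2.2 * h
  · intro v w
    simp only [rhoTheta, omega0]
    linear_combination (-(v.2.1 * w.1.1 - w.2.1 * v.1.1 + v.2.2 * w.1.2 - w.2.2 * v.1.2)) * h
  · intro z
    simp only [rhoTheta, rotKepler]
    have hq : (Real.cos (2 * θ) * z.1.1 + Real.sin (2 * θ) * z.1.2) ^ 2 +
        (Real.sin (2 * θ) * z.1.1 - Real.cos (2 * θ) * z.1.2) ^ 2 =
        z.1.1 ^ 2 + z.1.2 ^ 2 := by linear_combination (z.1.1 ^ 2 + z.1.2 ^ 2) * h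
    rw [hq]
    linear_combination ((z.2.1 ^ 2 + z.2.2 ^ 2) / 2 + z.1.1 * z.2.2 - z.1.2 * z.2.1) * h
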